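/- Let T̂ = (λ, a', s) be a non-vertical Heisenberg translation (a' ≠ 0). Then an element Ŝ ∈ Ĝ commutes with T̂ if and only if there exist λ' ∈ ℂ with |λ'| = 1, a unitary operator U of the orthogonal complement (ℂ·e)^⊥ in H with U(a') = λ'·a', b' ∈ H orthogonal to e with ⟨b',a'⟩ ∈ ℝ, and t ∈ ℂ with Re t = (1/2)‖b'‖², such that Ŝ(x,z) = ((λ'·⟨x,e⟩ + ⟨x', U⁻¹(b')⟩ + λ'·t·z)·e + U(x') + λ'·z·b', λ'·z) for all (x,z) ∈ H ⊕ ℂ. -/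

import Mathlib

noncomputable section

variable {H : Type*} [NormedAddCommGroup H] [InnerProductSpace ℂ H] [CompleteSpace H]

/-- The Hermitian form `Â((x,z),(y,w)) = -z·conj⟨y,e⟩ - ⟨x,e⟩·conj w + ⟨x',y'⟩`
(paper convention: linear in the first argument, with `⟨a,b⟩ = inner b a` in Mathlib,
and `x' = x - ⟨x,e⟩e`). -/
def hatA (e : H) (u v : H × ℂ) : ℂ :=
  - u.2 * (inner ℂ v.1 e : ℂ) - (inner ℂ e u.1 : ℂ) * (starRingEnd ℂ) v.2
    + (inner ℂ (v.1 - (inner ℂ e v.1 : ℂ) • e) (u.1 - (inner ℂ e u.1 : ℂ) • e) : ℂ)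

/-- Membership in the group `Ĝ` of bounded bijective linear maps preserving `Â`. -/
def memGhat (e : H) (T : (H × ℂ) →L[ℂ] (H × ℂ)) : Prop :=
  Function.Bijective T ∧ ∀ u v : H × ℂ, hatA e (T u) (T v) = hatA e u v

/-- `T` is the Heisenberg translation `(λ, a', s)`: an element of `Ĝ` sending
`(x,z)` to `λ·((⟨x,e⟩ + ⟨x',a'⟩ + s·z)·e + x' + z·a', z)`, where `|λ| = 1`,
`a' ⊥ e`, `s ≠ 0` and `Re s = ‖a'‖²/2`. -/
def IsHeisenberg (e : H) (T : (H × ℂ) →L[ℂ] (H × ℂ)) (lam : ℂ) (a' : H) (s : ℂ) :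
    Prop :=
  ‖lam‖ = 1 ∧ a' ∈ (ℂ ∙ e)ᗮ ∧ s ≠ 0 ∧ s.re = (1 / 2) * ‖a'‖ ^ 2 ∧
  memGhat e T ∧
  ∀ (x : H) (z : ℂ),
    T (x, z) = lam •
      (((((inner ℂ e x : ℂ) + (inner ℂ a' (x - (inner ℂ e x : ℂ) • e) : ℂ) + s * z) • e
          + (x - (inner ℂ e x : ℂ) • e) + z • a', z)) : H × ℂ)

/-- `K†`, the `Â`-orthogonal complement of a subspace `K` of `H ⊕ ℂ`. -/
def daggerHat (e : H) (K : Submodule ℂ (H × ℂ)) : Submodule ℂ (H × ℂ) where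
  carrier := {v | ∀ m ∈ K, hatA e v m = 0}
  add_mem' := by
    intro a b ha hb m hm
    have h1 := ha m hm
    have h2 := hb m hm
    simp only [hatA, Prod.fst_add, Prod.snd_add, inner_add_right, inner_sub_right,
      inner_smul_right, add_smul] at *
    ring_nf at *
    linear_combination h1 + h2
  zero_mem' := by
    intro m hm
    simp [hatA]
  smul_mem' := by
    intro c a ha m hm
    have h1 := ha m hm
    simp only [hatA, Prod.smul_fst, Prod.smul_snd, inner_smul_right, inner_sub_right,
      smul_eq_mul, smul_smul] at *
    ring_nf at *
    linear_combination c * h1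

end

section
variable {H : Type*} [NormedAddCommGroup H] [InnerProductSpace ℂ H] [CompleteSpace H]

/-- The component `x' = x - ⟨x,e⟩e` of `x`, as an element of `(ℂ·e)ᗮ`. -/
noncomputable def projPerp (e : H) (he : ‖e‖ = 1) (x : H) : ((ℂ ∙ e)ᗮ : Submodule ℂ H) :=
  ⟨x - (inner ℂ e x : ℂ) • e, by
    rw [Submodule.mem_orthogonal]
    intro u hu
    rcases Submodule.mem_span_singleton.1 hu with ⟨c, rfl⟩
    have h1 : (inner ℂ e e : ℂ) = 1 := by
      rw [inner_self_eq_norm_sq_to_K, he]; norm_num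
    simp [inner_smul_left, inner_sub_right, inner_smul_right, h1, he]
    ring⟩

set_option maxHeartbeats 4000000 in
/-- centralizer of a non-vertical Heisenberg translation
`T̂ = (λ, a', s)`: `Ŝ ∈ Ĝ` commutes with `T̂` iff it has the stated stabilizer form
with `U(a') = λ'·a'` and `⟨b',a'⟩ ∈ ℝ`. -/
theorem centralizer_nonvertical_translation
    (e : H) (he : ‖e‖ = 1) (lam s : ℂ) (a' : H) (ha' : a' ≠ 0)
    (T : (H × ℂ) →L[ℂ] (H × ℂ)) (hT : IsHeisenberg e T lam a' s)
    (S : (H × ℂ) →L[ℂ] (H × ℂ)) (hS : memGhat e S) :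
    S ∘L T = T ∘L S ↔
      ∃ (lam' : ℂ) (U : ((ℂ ∙ e)ᗮ : Submodule ℂ H) →L[ℂ] ((ℂ ∙ e)ᗮ : Submodule ℂ H))
        (b' : ((ℂ ∙ e)ᗮ : Submodule ℂ H)) (c' : ((ℂ ∙ e)ᗮ : Submodule ℂ H)) (t : ℂ),
        ‖lam'‖ = 1 ∧
        -- U is a unitary operator of (ℂ·e)ᗮ
        Function.Bijective U ∧
        (∀ u v : ((ℂ ∙ e)ᗮ : Submodule ℂ H), (inner ℂ (U u) (U v) : ℂ) = inner ℂ u v) ∧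
        -- U(a') = λ'·a'
        (∀ ha : a' ∈ (ℂ ∙ e)ᗮ, U ⟨a', ha⟩ = lam' • (⟨a', ha⟩ : ((ℂ ∙ e)ᗮ : Submodule ℂ H))) ∧
        -- ⟨b',a'⟩ ∈ ℝ
        (∃ r : ℝ, (inner ℂ a' (b' : H) : ℂ) = (r : ℂ)) ∧
        -- Re t = ‖b'‖²/2
        t.re = (1 / 2) * ‖(b' : H)‖ ^ 2 ∧
        -- c' = U⁻¹(b')
        U c' = b' ∧
        -- the stabilizer form of Ŝ
        (∀ (x : H) (z : ℂ),
          S (x, z) =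
            (((lam' * (inner ℂ e x : ℂ)
                + (inner ℂ (c' : H) (x - (inner ℂ e x : ℂ) • e) : ℂ)
                + lam' * t * z) • e
              + ((U (projPerp e he x) : H))
              + (lam' * z) • (b' : H), lam' * z) : H × ℂ)) := by
  obtain ⟨hlam, ha'mem, hs0, hsre, hTG, hTform⟩ := hT
  obtain ⟨hSbij, hSA⟩ := hS
  have hee : (inner ℂ e e : ℂ) = 1 := by rw [inner_self_eq_norm_sq_to_K, he]; norm_num
  have hea : (inner ℂ e a' : ℂ) = 0 := ha'mem e (Submodule.mem_span_singleton_self e)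
  have hae : (inner ℂ a' e : ℂ) = 0 := by rw [← inner_conj_symm, hea, map_zero]
  have haa : (inner ℂ a' a' : ℂ) = (‖a'‖ : ℂ) ^ 2 := by
    rw [inner_self_eq_norm_sq_to_K]; norm_cast
  have hA0 : ((‖a'‖ : ℂ) ^ 2 : ℂ) ≠ 0 := by
    simp [pow_ne_zero_iff, Complex.ofReal_ne_zero, norm_ne_zero_iff, ha']
  have hlam0 : lam ≠ 0 := by
    intro h; rw [h] at hlam; simp at hlam
  have memPerp : ∀ w : H, (inner ℂ e w : ℂ) = 0 → w ∈ (ℂ ∙ e)ᗮ := by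
    intro w h; rw [Submodule.mem_orthogonal]; intro u hu
    rcases Submodule.mem_span_singleton.1 hu with ⟨c, rfl⟩
    simp [inner_smul_left, h]
  have perpInner : ∀ w : H, w ∈ (ℂ ∙ e)ᗮ → (inner ℂ e w : ℂ) = 0 := fun w h =>
    h e (Submodule.mem_span_singleton_self e)
  have hTg : ∀ (x : H) (z : ℂ), T (x, z) =
      lam • ((((inner ℂ e x : ℂ) + (inner ℂ a' x : ℂ) + s * z) • e
        + (x - (inner ℂ e x : ℂ) • e) + z • a' : H), z) := by
    intro x z
    have key : (inner ℂ a' (x - (inner ℂ e x : ℂ) • e) : ℂ) = inner ℂ a' x := by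
      simp [inner_sub_right, inner_smul_right, hae]
    rw [hTform, key]
  have hprojPerp : ∀ x : H, ((projPerp e he x : H)) = x - (inner ℂ e x : ℂ) • e := fun x => rfl
  constructor
  · intro hcomm
    have hc : ∀ u, S (T u) = T (S u) := by
      intro u
      have := DFunLike.congr_fun hcomm u
      simpa using this
    set b : H := (S (0,1)).1 with hbdef
    set ρ : ℂ := (S (0,1)).2 with hρdef
    have hS01 : S ((0:H),(1:ℂ)) = (b, ρ) := rfl
    set β : ℂ := (inner ℂ e b : ℂ) with hβdef
    set α : ℂ := (inner ℂ a' b : ℂ) with hαdef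
    clear_value b ρ β α
    -- T at (0,1)
    have hT01 : T ((0:H),(1:ℂ)) = lam • ((s • e + a' : H), (1:ℂ)) := by
      rw [hTg]
      simp
    -- E1
    have hE1 : s • S ((e:H),(0:ℂ)) + S ((a':H),(0:ℂ)) + ((b, ρ) : H × ℂ)
        = (((β + α + s * ρ) • e + (b - β • e) + ρ • a' : H), ρ) := by
      have h := hc ((0:H),(1:ℂ))
      rw [hT01, map_smul] at h
      have hd : ((s • e + a' : H), (1:ℂ)) = s • (((e:H),(0:ℂ)) : H × ℂ)
          + (((a':H),(0:ℂ)) : H × ℂ) + (((0:H),(1:ℂ)) : H × ℂ) := by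
        refine Prod.ext ?_ ?_ <;> simp
      rw [hd, map_add, map_add, map_smul, hS01, hTg] at h
      rw [← hβdef, ← hαdef] at h
      exact smul_right_injective _ hlam0 h
    -- T at T(0,1)
    have hT201 : T (T ((0:H),(1:ℂ)))
        = (lam * lam) • (((2*s + (‖a'‖:ℂ)^2) • e + (2:ℂ) • a' : H), (1:ℂ)) := by
      rw [hT01, map_smul, hTg]
      have h1 : (inner ℂ e (s • e + a') : ℂ) = s := by
        simp [inner_add_right, inner_smul_right, hee, he, hea]
      have h2 : (inner ℂ a' (s • e + a') : ℂ) = (‖a'‖:ℂ)^2 := by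
        simp [inner_add_right, inner_smul_right, hae, haa]
      rw [h1, h2, smul_smul]
      congr 1
      refine Prod.ext ?_ rfl
      show (s + (‖a'‖:ℂ)^2 + s * 1) • e + (s • e + a' - s • e) + (1:ℂ) • a'
        = (2*s + (‖a'‖:ℂ)^2) • e + (2:ℂ) • a'
      module
    -- E2
    have hE2 : (2*s + (‖a'‖:ℂ)^2) • S ((e:H),(0:ℂ)) + (2:ℂ) • S ((a':H),(0:ℂ)) + ((b, ρ) : H × ℂ)
        = (((β + 2*α + 2*s*ρ + ρ*(‖a'‖:ℂ)^2) • e + ((b - β • e) + (2*ρ) • a') : H), ρ) := by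
      have h := hc (T ((0:H),(1:ℂ)))
      rw [hc ((0:H),(1:ℂ))] at h
      rw [hT201, map_smul] at h
      have hd : (((2*s + (‖a'‖:ℂ)^2) • e + (2:ℂ) • a' : H), (1:ℂ))
          = (2*s + (‖a'‖:ℂ)^2) • (((e:H),(0:ℂ)) : H × ℂ)
          + (2:ℂ) • (((a':H),(0:ℂ)) : H × ℂ) + (((0:H),(1:ℂ)) : H × ℂ) := by
        refine Prod.ext ?_ ?_ <;> simp
      rw [hd, map_add, map_add, map_smul, map_smul, hS01] at h
      rw [hTg b ρ] at h
      rw [← hβdef, ← hαdef] at h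
      have hy1 : (inner ℂ e ((β + α + s * ρ) • e + (b - β • e) + ρ • a' : H) : ℂ)
          = β + α + s * ρ := by
        simp only [inner_add_right, inner_sub_right, inner_smul_right, hee, hea, ← hβdef]
        ring
      have hy2 : (inner ℂ a' ((β + α + s * ρ) • e + (b - β • e) + ρ • a' : H) : ℂ)
          = α + ρ * (‖a'‖:ℂ)^2 := by
        simp only [inner_add_right, inner_sub_right, inner_smul_right, hae, haa, ← hαdef]
        ring
      rw [map_smul, hTg _ ρ, hy1, hy2, smul_smul] at h
      have h2 := smul_right_injective (H × ℂ) (mul_ne_zero hlam0 hlam0) h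
      rw [h2]
      refine Prod.ext ?_ rfl
      show ((β + α + s * ρ) + (α + ρ * (‖a'‖:ℂ)^2) + s * ρ) • e
          + ((β + α + s * ρ) • e + (b - β • e) + ρ • a' - (β + α + s * ρ) • e) + ρ • a'
        = (β + 2*α + 2*s*ρ + ρ*(‖a'‖:ℂ)^2) • e + ((b - β • e) + (2*ρ) • a')
      module
    -- components
    have hE1f := congrArg Prod.fst hE1
    have hE1s := congrArg Prod.snd hE1
    have hE2f := congrArg Prod.fst hE2
    have hE2s := congrArg Prod.snd hE2
    simp only [Prod.fst_add, Prod.snd_add, Prod.smul_fst, Prod.smul_snd, smul_eq_mul] at hE1f hE1s hE2f hE2s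
    -- S(e,0)
    have hSe1 : (S ((e:H),(0:ℂ))).1 = ρ • e := by
      have h : ((‖a'‖:ℂ)^2) • (S ((e:H),(0:ℂ))).1 = ((‖a'‖:ℂ)^2) • (ρ • e) := by
        linear_combination (norm := module) hE2f - (2:ℂ) • hE1f
      exact smul_right_injective H hA0 h
    have hSe2 : (S ((e:H),(0:ℂ))).2 = 0 := by
      have h : ((‖a'‖:ℂ)^2) * (S ((e:H),(0:ℂ))).2 = ((‖a'‖:ℂ)^2) * 0 := by
        linear_combination hE2s - 2 * hE1s
      exact mul_left_cancel₀ hA0 h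
    have hSe : S ((e:H),(0:ℂ)) = ρ • (((e:H),(0:ℂ)) : H × ℂ) := by
      refine Prod.ext ?_ ?_
      · simpa using hSe1
      · simpa using hSe2
    -- S(a',0)
    have hSa1 : (S ((a':H),(0:ℂ))).1 = α • e + ρ • a' := by
      rw [hSe1] at hE1f
      linear_combination (norm := module) hE1f
    have hSa2 : (S ((a':H),(0:ℂ))).2 = 0 := by
      rw [hSe2] at hE1s
      linear_combination hE1s
    -- |ρ| = 1
    have hρc : ρ * (starRingEnd ℂ) ρ = 1 := by
      have h := hSA ((e:H),(0:ℂ)) ((0:H),(1:ℂ))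
      rw [hSe, hS01] at h
      simp only [hatA, Prod.smul_fst, Prod.smul_snd, Prod.fst, Prod.snd, smul_eq_mul,
        inner_smul_left, inner_smul_right, inner_sub_left, inner_sub_right,
        inner_zero_left, inner_zero_right, hee, hea, hae] at h
      simp at h
      linear_combination h
    have hρ0 : ρ ≠ 0 := by
      intro h0
      rw [h0] at hρc
      simp at hρc
    have hρn : ‖ρ‖ = 1 := by
      have h := hρc
      rw [Complex.mul_conj'] at h
      have h2 : (‖ρ‖:ℝ)^2 = 1 := by exact_mod_cast h
      nlinarith [norm_nonneg ρ]
    -- key1 : commutation at (x,0)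
    have key1 : ∀ x : H, (S (x,(0:ℂ))).2 = 0 ∧
        (inner ℂ a' (S (x,(0:ℂ))).1 : ℂ) = ρ * (inner ℂ a' x : ℂ) := by
      intro x
      have h := hc (x, 0)
      rw [hTg x 0, map_smul] at h
      have hveq : ((((inner ℂ e x : ℂ) + (inner ℂ a' x : ℂ) + s * 0) • e
          + (x - (inner ℂ e x : ℂ) • e) + (0:ℂ) • a' : H), (0:ℂ))
          = (inner ℂ a' x : ℂ) • (((e:H),(0:ℂ)) : H × ℂ) + ((x, (0:ℂ)) : H × ℂ) := by
        refine Prod.ext ?_ ?_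
        · show ((inner ℂ e x : ℂ) + (inner ℂ a' x : ℂ) + s * 0) • e
            + (x - (inner ℂ e x : ℂ) • e) + (0:ℂ) • a' = (inner ℂ a' x : ℂ) • e + x
          module
        · simp
      rw [hveq, map_add, map_smul, hSe] at h
      rw [show T (S (x, (0:ℂ))) = T ((S (x,(0:ℂ))).1, (S (x,(0:ℂ))).2) from rfl, hTg] at h
      have h2 := smul_right_injective (H × ℂ) hlam0 h
      have hf := congrArg Prod.fst h2
      simp only [Prod.fst_add, Prod.smul_fst, Prod.smul_snd, smul_eq_mul, Prod.smul_snd] at hf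
      -- hf : inner ℂ a' x • (ρ • e)?? + (S (x,0)).1 = (...) • e + (...) + (S (x,0)).2 • a'
      have hfa := congrArg (fun v : H => (inner ℂ a' v : ℂ)) hf
      simp only [inner_add_right, inner_sub_right, inner_smul_right, hae, haa] at hfa
      have hζA : (S (x,(0:ℂ))).2 * ((‖a'‖:ℂ)^2) = 0 := by linear_combination - hfa
      have hζ : (S (x,(0:ℂ))).2 = 0 := by
        rcases mul_eq_zero.mp hζA with h' | h'
        · exact h'
        · exact absurd h' hA0
      refine ⟨hζ, ?_⟩
      have hfe := congrArg (fun v : H => (inner ℂ e v : ℂ)) hf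
      simp only [inner_add_right, inner_sub_right, inner_smul_right, hee, hea] at hfe
      rw [hζ] at hfe
      linear_combination - hfe
    -- general second component
    have hz2 : ∀ (x : H) (z : ℂ), S (x, z) = (((S (x,(0:ℂ))).1 + z • b : H), ρ * z) := by
      intro x z
      have hveq : ((x, z) : H × ℂ) = ((x,(0:ℂ)) : H × ℂ) + z • (((0:H),(1:ℂ)) : H × ℂ) := by
        refine Prod.ext ?_ ?_ <;> simp
      rw [hveq, map_add, map_smul, hS01]
      refine Prod.ext ?_ ?_
      · simp
      · simp [(key1 x).1]
        ring
    -- isometry on perp parts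
    have hiso : ∀ x y : H,
        (inner ℂ ((S (y,(0:ℂ))).1 - (inner ℂ e (S (y,(0:ℂ))).1 : ℂ) • e)
          ((S (x,(0:ℂ))).1 - (inner ℂ e (S (x,(0:ℂ))).1 : ℂ) • e) : ℂ)
        = inner ℂ (y - (inner ℂ e y : ℂ) • e) (x - (inner ℂ e x : ℂ) • e) := by
      intro x y
      have h := hSA (x,0) (y,0)
      simp only [hatA, (key1 x).1, (key1 y).1] at h
      simpa using h
    -- e-component via hatA with (0,1)
    have hPe : ∀ x : H,
        (inner ℂ e (S (x,(0:ℂ))).1 : ℂ) = ρ * (inner ℂ e x : ℂ)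
          + ρ * (inner ℂ (b - β • e) ((S (x,(0:ℂ))).1 - (inner ℂ e (S (x,(0:ℂ))).1 : ℂ) • e) : ℂ) := by
      intro x
      have h := hSA (x,0) ((0:H),(1:ℂ))
      rw [hS01] at h
      simp only [hatA, (key1 x).1] at h
      simp only [inner_zero_right, inner_zero_left, zero_sub, inner_neg_left, inner_neg_right,
        smul_zero, sub_zero, zero_smul, mul_zero, zero_mul, neg_zero, map_one, mul_one,
        zero_add, add_zero, inner_smul_left, inner_smul_right, hee] at h
      rw [← hβdef] at h
      -- h : -(inner ℂ e (S(x,0)).1) * conj ρ + inner ℂ (b - β•e) ((S(x,0)).1 - ..) = -(inner ℂ e x)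
      have hcρ : (starRingEnd ℂ) ρ * ρ = 1 := by rw [mul_comm]; exact hρc
      linear_combination (-ρ) * h - (inner ℂ e (S (x,(0:ℂ))).1 : ℂ) * hρc
    -- preliminary facts
    have hbpe : (inner ℂ e (b - β • e) : ℂ) = 0 := by
      simp [inner_sub_right, inner_smul_right, hee, he, ← hβdef]
    have hbpmem : b - β • e ∈ (ℂ ∙ e)ᗮ := memPerp _ hbpe
    have hproj : ∀ y : H,
        ((Submodule.orthogonalProjection ((ℂ ∙ e)ᗮ) y : H)) = y - (inner ℂ e y : ℂ) • e := by
      intro y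
      refine Submodule.eq_starProjection_of_mem_of_inner_eq_zero (K := (ℂ ∙ e)ᗮ)
        (memPerp _ (by simp [inner_sub_right, inner_smul_right, hee, he])) ?_
      intro w hw
      have h1 : y - (y - (inner ℂ e y : ℂ) • e) = (inner ℂ e y : ℂ) • e := by module
      rw [h1, inner_smul_left, perpInner w hw, mul_zero]
    set U : ((ℂ ∙ e)ᗮ : Submodule ℂ H) →L[ℂ] ((ℂ ∙ e)ᗮ : Submodule ℂ H) :=
      (Submodule.orthogonalProjection ((ℂ ∙ e)ᗮ)) ∘L ((ContinuousLinearMap.fst ℂ H ℂ) ∘L (S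
        ∘L ((ContinuousLinearMap.inl ℂ H ℂ) ∘L (Submodule.subtypeL _)))) with hUdef
    have hU : ∀ w : ((ℂ ∙ e)ᗮ : Submodule ℂ H),
        ((U w : H)) = (S (((w:H)),(0:ℂ))).1 - (inner ℂ e (S ((w:H),(0:ℂ))).1 : ℂ) • e := by
      intro w
      rw [hUdef]
      simp only [ContinuousLinearMap.comp_apply, Submodule.subtypeL_apply,
        ContinuousLinearMap.inl_apply, ContinuousLinearMap.coe_fst']
      exact hproj _
    have hUinn : ∀ u v : ((ℂ ∙ e)ᗮ : Submodule ℂ H),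
        (inner ℂ (U u) (U v) : ℂ) = inner ℂ u v := by
      intro u v
      rw [Submodule.coe_inner, Submodule.coe_inner, hU u, hU v, hiso (v:H) (u:H),
        perpInner _ u.2, perpInner _ v.2]
      simp
    have hUinj : Function.Injective U := by
      intro u v huv
      have h2 : U (u - v) = 0 := by rw [map_sub, huv, sub_self]
      have h1 : (inner ℂ (u - v) (u - v) : ℂ) = 0 := by
        rw [← hUinn (u-v) (u-v), h2, inner_zero_left]
      exact sub_eq_zero.mp (inner_self_eq_zero.mp h1)
    have hUsurj : Function.Surjective U := by
      intro w
      obtain ⟨u, hu⟩ := hSbij.2 (((w:H)), (0:ℂ))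
      obtain ⟨x, z⟩ := u
      have hz' : ρ * z = 0 := by
        have h1 := congrArg Prod.snd hu
        rw [hz2 x z] at h1
        simpa using h1
      have hz0 : z = 0 := by
        rcases mul_eq_zero.mp hz' with h' | h'
        · exact absurd h' hρ0
        · exact h'
      rw [hz0] at hu
      refine ⟨⟨x - (inner ℂ e x : ℂ) • e,
        memPerp _ (by simp [inner_sub_right, inner_smul_right, hee, he])⟩, ?_⟩
      apply Subtype.ext
      rw [hU]
      have hS1 : (S ((x - (inner ℂ e x : ℂ) • e : H), (0:ℂ))).1
          = (w : H) - ((inner ℂ e x : ℂ) * ρ) • e := by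
        have hveq : ((x - (inner ℂ e x : ℂ) • e : H), (0:ℂ))
            = ((x,(0:ℂ)) : H × ℂ) - (inner ℂ e x : ℂ) • (((e:H),(0:ℂ)) : H × ℂ) := by
          refine Prod.ext ?_ ?_ <;> simp
        rw [hveq, map_sub, map_smul, hSe, hu]
        simp [smul_smul]
      rw [hS1]
      have hew : (inner ℂ e (w : H) : ℂ) = 0 := perpInner _ w.2
      have h7 : (inner ℂ e ((w:H) - ((inner ℂ e x : ℂ) * ρ) • e) : ℂ)
          = - ((inner ℂ e x : ℂ) * ρ) := by
        simp [inner_sub_right, inner_smul_right, hee, he, hew]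
      rw [h7]
      module
    -- value of U at a'
    have hSea1 : (inner ℂ e (S ((a':H),(0:ℂ))).1 : ℂ) = α := by
      rw [hSa1]
      simp [inner_add_right, inner_smul_right, hee, he, hea, ← hαdef]
    have hUa : ∀ ha : a' ∈ (ℂ ∙ e)ᗮ,
        U ⟨a', ha⟩ = ρ • (⟨a', ha'mem⟩ : ((ℂ ∙ e)ᗮ : Submodule ℂ H)) := by
      intro ha
      apply Subtype.ext
      rw [hU]
      show (S ((a':H),(0:ℂ))).1 - (inner ℂ e (S ((a':H),(0:ℂ))).1 : ℂ) • e = ρ • a'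
      rw [hSea1, hSa1]
      module
    -- the relation α = ρ² conj α
    have hαρ : α = ρ * ρ * (starRingEnd ℂ) α := by
      have h9 := hPe a'
      rw [hSea1, hea, hSa1] at h9
      have h10 : (α • e + ρ • a' : H) - α • e = ρ • a' := by module
      rw [h10] at h9
      have h11 : (inner ℂ (b - β • e) (ρ • a') : ℂ) = ρ * (starRingEnd ℂ) α := by
        rw [inner_smul_right, inner_sub_left, inner_smul_left, hea, ← inner_conj_symm, ← hαdef]
        ring
      rw [h11] at h9
      linear_combination h9
    -- b' element
    set b'el : ((ℂ ∙ e)ᗮ : Submodule ℂ H) :=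
      ⟨(starRingEnd ℂ) ρ • (b - β • e), Submodule.smul_mem _ _ hbpmem⟩ with hb'eldef
    have hb'val : ((b'el : H)) = (starRingEnd ℂ) ρ • (b - β • e) := rfl
    obtain ⟨c', hc'⟩ := hUsurj b'el
    refine ⟨ρ, U, b'el, c', (starRingEnd ℂ) ρ * β, hρn, ⟨hUinj, hUsurj⟩, hUinn, hUa,
      ?_, ?_, hc', ?_⟩
    -- reality of ⟨a', b'⟩
    · refine ⟨((starRingEnd ℂ) ρ * α).re, ?_⟩
      have h4 : (inner ℂ a' ((b'el : H)) : ℂ) = (starRingEnd ℂ) ρ * α := by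
        rw [hb'val, inner_smul_right, inner_sub_right, inner_smul_right, hae, ← hαdef]
        ring
      rw [h4]
      have h5 : (starRingEnd ℂ) ((starRingEnd ℂ) ρ * α) = (starRingEnd ℂ) ρ * α := by
        rw [map_mul, Complex.conj_conj]
        linear_combination (-(starRingEnd ℂ) ρ) * hαρ - (ρ * (starRingEnd ℂ) α) * hρc
      exact (Complex.conj_eq_iff_re.mp h5).symm
    -- real part of t
    · have h := hSA ((0:H),(1:ℂ)) ((0:H),(1:ℂ))
      rw [hS01] at h
      simp only [hatA] at h
      simp only [inner_zero_right, inner_zero_left, zero_sub, smul_zero, sub_zero,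
        zero_smul, mul_zero, zero_mul, neg_zero, map_one, mul_one, zero_add, add_zero,
        inner_neg_left, inner_neg_right, neg_neg] at h
      rw [← hβdef] at h
      have hbe : (inner ℂ b e : ℂ) = (starRingEnd ℂ) β := by
        rw [← inner_conj_symm, ← hβdef]
      rw [hbe] at h
      have hnorm : (inner ℂ (b - β • e) (b - β • e) : ℂ) = ((‖b - β • e‖ : ℝ) : ℂ)^2 := by
        rw [inner_self_eq_norm_sq_to_K]; norm_cast
      rw [hnorm] at h
      -- h : -ρ * conj β - β * conj ρ + ‖bp‖² = 0 (some arrangement)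
      have h12 : (((‖b - β • e‖ : ℝ)^2 : ℝ) : ℂ)
          = (((2 * ((starRingEnd ℂ) ρ * β).re : ℝ)) : ℂ) := by
        rw [← Complex.add_conj]
        push_cast
        rw [map_mul, Complex.conj_conj]
        linear_combination h
      have h13 : (‖b - β • e‖ : ℝ)^2 = 2 * ((starRingEnd ℂ) ρ * β).re := by
        exact_mod_cast h12
      rw [hb'val, norm_smul, RCLike.norm_conj, hρn, one_mul]
      linarith
    -- the formula
    · intro x z
      rw [hz2 x z]
      have hSx'1 : (S ((x - (inner ℂ e x : ℂ) • e : H), (0:ℂ))).1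
          = (S (x,(0:ℂ))).1 - ((inner ℂ e x : ℂ) * ρ) • e := by
        have hveq : ((x - (inner ℂ e x : ℂ) • e : H), (0:ℂ))
            = ((x,(0:ℂ)) : H × ℂ) - (inner ℂ e x : ℂ) • (((e:H),(0:ℂ)) : H × ℂ) := by
          refine Prod.ext ?_ ?_ <;> simp
        rw [hveq, map_sub, map_smul, hSe]
        simp [smul_smul]
      have hSex' : (inner ℂ e (S ((x - (inner ℂ e x : ℂ) • e : H), (0:ℂ))).1 : ℂ)
          = (inner ℂ e (S (x,(0:ℂ))).1 : ℂ) - (inner ℂ e x : ℂ) * ρ := by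
        rw [hSx'1]
        simp [inner_sub_right, inner_smul_right, hee, he]
      have hUx : ((U (projPerp e he x) : H))
          = (S (x,(0:ℂ))).1 - (inner ℂ e (S (x,(0:ℂ))).1 : ℂ) • e := by
        rw [hU, hprojPerp, hSex', hSx'1]
        module
      have hcx : (inner ℂ ((c' : H)) (x - (inner ℂ e x : ℂ) • e) : ℂ)
          = (inner ℂ e (S (x,(0:ℂ))).1 : ℂ) - ρ * (inner ℂ e x : ℂ) := by
        have h8 := hUinn c' (projPerp e he x)
        rw [hc'] at h8
        rw [Submodule.coe_inner, Submodule.coe_inner, hprojPerp] at h8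
        rw [hb'val, hUx, inner_smul_left, Complex.conj_conj] at h8
        -- h8 : ρ * inner ℂ (b - β•e) ((Sx)1 - ⟨e,(Sx)1⟩e) = inner ℂ c'.val (x - ⟨e,x⟩e)
        have h9 := hPe x
        linear_combination - h8 - h9
      refine Prod.ext ?_ rfl
      show (S (x,(0:ℂ))).1 + z • b = _
      rw [hcx, hUx, hb'val]
      match_scalars <;> (try ring) <;> (try linear_combination (-z) * hρc)


  · rintro ⟨ρ, U, b', c', t, hρn, hUbij, hUinner, hUaAll, ⟨r, hr⟩, htre, hUc, hform⟩
    have hUa := hUaAll ha'mem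
    have hρc : ρ * (starRingEnd ℂ) ρ = 1 := by
      rw [Complex.mul_conj', hρn]; norm_num
    have hb'e : (inner ℂ e (b' : H) : ℂ) = 0 := perpInner _ b'.2
    have hUe : ∀ w : ((ℂ ∙ e)ᗮ : Submodule ℂ H), (inner ℂ e ((U w : H)) : ℂ) = 0 := fun w =>
      perpInner _ (U w).2
    have hsub : ∀ u v : ((ℂ ∙ e)ᗮ : Submodule ℂ H), (inner ℂ (u : H) (v : H) : ℂ) = inner ℂ u v :=
      fun u v => rfl
    have haU : ∀ w : ((ℂ ∙ e)ᗮ : Submodule ℂ H),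
        (inner ℂ a' ((U w : H)) : ℂ) = ρ * (inner ℂ a' (w : H) : ℂ) := by
      intro w
      have h := hUinner ⟨a', ha'mem⟩ w
      rw [hUa] at h
      have h2 : ((starRingEnd ℂ) ρ) * (inner ℂ a' ((U w : H)) : ℂ) = inner ℂ a' (w : H) := by
        simpa [Submodule.coe_inner, inner_smul_left] using h
      linear_combination ρ * h2 - (inner ℂ a' ((U w : H)) : ℂ) * hρc
    have hca : (inner ℂ (c' : H) a' : ℂ) = ρ * (r : ℂ) := by
      have h := hUinner c' ⟨a', ha'mem⟩
      rw [hUc, hUa] at h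
      simp only [Submodule.coe_inner, inner_smul_right] at h
      have hba : (inner ℂ (b' : H) a' : ℂ) = (r : ℂ) := by
        rw [← inner_conj_symm, hr]
        simp
      rw [← h, hba]
    refine ContinuousLinearMap.ext ?_
    rintro ⟨x, z⟩
    rw [ContinuousLinearMap.comp_apply, ContinuousLinearMap.comp_apply]
    rw [hTg x z, map_smul, hform _ z, hform x z, hTg]
    -- abbreviations
    have hiax : (inner ℂ a' (x - (inner ℂ e x : ℂ) • e) : ℂ) = inner ℂ a' x := by
      simp [inner_sub_right, inner_smul_right, hae]
    set q : ℂ := (inner ℂ e x : ℂ) + (inner ℂ a' x : ℂ) + s * z with hq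
    -- LHS inner ℂ computations
    have hV1 : (inner ℂ e (q • e + (x - (inner ℂ e x : ℂ) • e) + z • a') : ℂ) = q := by
      simp [inner_add_right, inner_sub_right, inner_smul_right, hee, he, hea]
    have hV2 : projPerp e he (q • e + (x - (inner ℂ e x : ℂ) • e) + z • a')
        = projPerp e he x + z • ⟨a', ha'mem⟩ := by
      apply Subtype.ext
      simp only [Submodule.coe_add, Submodule.coe_smul, hprojPerp, hV1]
      module
    have hV3 : (inner ℂ (c' : H) ((q • e + (x - (inner ℂ e x : ℂ) • e) + z • a')
        - (inner ℂ e (q • e + (x - (inner ℂ e x : ℂ) • e) + z • a') : ℂ) • e) : ℂ)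
        = (inner ℂ (c' : H) (x - (inner ℂ e x : ℂ) • e) : ℂ) + z * (ρ * r) := by
      rw [hV1]
      have : (q • e + (x - (inner ℂ e x : ℂ) • e) + z • a') - q • e
          = (x - (inner ℂ e x : ℂ) • e) + z • a' := by module
      rw [this, inner_add_right, inner_smul_right, hca]
    rw [hV3, hV2, hV1, map_add, map_smul, hUa]
    -- RHS inner ℂ computations
    set p : ℂ := ρ * (inner ℂ e x : ℂ) + (inner ℂ (c' : H) (x - (inner ℂ e x : ℂ) • e) : ℂ)
      + ρ * t * z with hp
    have hW1 : (inner ℂ e (p • e + ((U (projPerp e he x) : H)) + (ρ * z) • (b' : H)) : ℂ) = p := by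
      simp [inner_add_right, inner_smul_right, hee, he, hUe, hb'e]
    have hW2 : (inner ℂ a' (p • e + ((U (projPerp e he x) : H)) + (ρ * z) • (b' : H)) : ℂ)
        = ρ * (inner ℂ a' x : ℂ) + (ρ * z) * r := by
      rw [inner_add_right, inner_add_right, inner_smul_right, inner_smul_right, hae,
        haU, hprojPerp, hiax, hr]
      ring
    rw [hW1, hW2]
    -- final comparison
    refine Prod.ext ?_ ?_
    · simp only [Prod.smul_fst, Prod.fst_add, Prod.smul_snd, Submodule.coe_add,
        Submodule.coe_smul, smul_smul]
      match_scalars <;>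
        first
          | ring
          | linear_combination lam * z * hρc
          | linear_combination lam * z * (r:ℂ) * hρc
          | linear_combination (lam * z * (r:ℂ) + lam * z * t) * hρc
    · rfl

end
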